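/- arXiv:2404.19220 — 2 statements merged into one kernel-verified Lean document; each statement's English description precedes it below -/
import Mathlib

section
/- For any matrix M ∈ ℝ^{(p1 p2)×(q1 q2)} and any β1 ∈ ℝ^{p1×q1}, β2 ∈ ℝ^{p2×q2}, ‖M − β2 ⊗ β1‖_F = ‖R(M) − vec(β2) vec(β1)ᵀ‖_F. Consequently, the nearest Kronecker product problem min_{β1,β2} ‖M − β2 ⊗ β1‖_F is equivalent to finding the nearest rank-one approximation of R(M). -/
open Matrix Kronecker
namespace KPF

/-- Column-major vectorization of a matrix, indexed by (column, row). -/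
def vec {p q : ℕ} (M : Matrix (Fin p) (Fin q) ℝ) : Fin q × Fin p → ℝ :=
  fun jc => M jc.2 jc.1

/-- The Pitsianis–Van Loan rearrangement operator: rows of `R M` are the
vectorized `p1 × q1` blocks of `M`. -/
def R {p1 p2 q1 q2 : ℕ} (M : Matrix (Fin p2 × Fin p1) (Fin q2 × Fin q1) ℝ) :
    Matrix (Fin q2 × Fin p2) (Fin q1 × Fin p1) ℝ :=
  fun ji cr => M (ji.2, cr.2) (ji.1, cr.1)

/-- Frobenius norm. -/
noncomputable def frob {m n : Type*} [Fintype m] [Fintype n] (M : Matrix m n ℝ) : ℝ :=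
  Real.sqrt (∑ i, ∑ j, (M i j) ^ 2)

/-- Spectral (ℓ2 operator) norm. -/
noncomputable def spec {m n : Type*} [Fintype m] [Fintype n] [DecidableEq n]
    (A : Matrix m n ℝ) : ℝ :=
  ‖LinearMap.toContinuousLinearMap (Matrix.toEuclideanLin A)‖

/-- Singular values of a matrix, in non-increasing order. -/
noncomputable def sv {m n : ℕ} (A : Matrix (Fin m) (Fin n) ℝ) : Fin n → ℝ :=
  fun k =>
    Real.sqrt ((Matrix.isHermitian_conjTranspose_mul_self A).eigenvalues
      (Tuple.sort (Matrix.isHermitian_conjTranspose_mul_self A).eigenvalues k.rev))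

/-- Smallest singular value of a square matrix. -/
noncomputable def sMin {d : ℕ} (A : Matrix (Fin d) (Fin d) ℝ) : ℝ :=
  sInf (Set.range (sv A))

/-- sin-Θ distance between the column spans of two orthonormal matrices. -/
noncomputable def sinTheta {p d : ℕ} (W1 W2 : Matrix (Fin p) (Fin d) ℝ) : ℝ :=
  Real.sqrt (1 - (sMin (W1ᵀ * W2)) ^ 2)

/-- ‖M − β2 ⊗ β1‖_F = ‖R(M) − vec(β2)vec(β1)ᵀ‖_F, so the nearest Kronecker
product problem is equivalent to nearest rank-one approximation of R(M). -/
theorem stmt5 {p1 p2 q1 q2 : ℕ}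
    (M : Matrix (Fin p2 × Fin p1) (Fin q2 × Fin q1) ℝ) :
    (∀ (β1 : Matrix (Fin p1) (Fin q1) ℝ) (β2 : Matrix (Fin p2) (Fin q2) ℝ),
      frob (M - β2 ⊗ₖ β1) = frob (R M - Matrix.vecMulVec (vec β2) (vec β1))) ∧
    sInf {r : ℝ | ∃ (β1 : Matrix (Fin p1) (Fin q1) ℝ) (β2 : Matrix (Fin p2) (Fin q2) ℝ),
        r = frob (M - β2 ⊗ₖ β1)} =
      sInf {r : ℝ | ∃ (β1 : Matrix (Fin p1) (Fin q1) ℝ) (β2 : Matrix (Fin p2) (Fin q2) ℝ),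
        r = frob (R M - Matrix.vecMulVec (vec β2) (vec β1))} := by
  have key : ∀ (β1 : Matrix (Fin p1) (Fin q1) ℝ) (β2 : Matrix (Fin p2) (Fin q2) ℝ),
      frob (M - β2 ⊗ₖ β1) = frob (R M - Matrix.vecMulVec (vec β2) (vec β1)) := by
    intro β1 β2
    unfold frob
    congr 1
    have h1 : (∑ i : Fin p2 × Fin p1, ∑ j : Fin q2 × Fin q1,
        ((M - β2 ⊗ₖ β1) i j) ^ 2) =
        ∑ x : (Fin p2 × Fin p1) × (Fin q2 × Fin q1),
          ((M - β2 ⊗ₖ β1) x.1 x.2) ^ 2 := by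
      exact (Fintype.sum_prod_type (f := fun x => ((M - β2 ⊗ₖ β1) x.1 x.2) ^ 2)).symm
    have h2 : (∑ i : Fin q2 × Fin p2, ∑ j : Fin q1 × Fin p1,
        ((R M - Matrix.vecMulVec (vec β2) (vec β1)) i j) ^ 2) =
        ∑ x : (Fin q2 × Fin p2) × (Fin q1 × Fin p1),
          ((R M - Matrix.vecMulVec (vec β2) (vec β1)) x.1 x.2) ^ 2 := by
      exact (Fintype.sum_prod_type
        (f := fun x => ((R M - Matrix.vecMulVec (vec β2) (vec β1)) x.1 x.2) ^ 2)).symm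
    rw [h1, h2]
    apply Fintype.sum_equiv
      ⟨fun x => ((x.2.1, x.1.1), (x.2.2, x.1.2)),
       fun y => ((y.1.2, y.2.2), (y.1.1, y.2.1)), fun _ => rfl, fun _ => rfl⟩
    intro x
    simp [R, vec, Matrix.sub_apply, Matrix.vecMulVec_apply, Matrix.kroneckerMap_apply,
      mul_comm]
  refine ⟨key, ?_⟩
  congr 1
  ext r
  simp only [Set.mem_setOf_eq, key]


end KPF
end

section
/- The parametrization ν = β2 ⊗ β1 is identifiable only up to scaling: if β1, β1' ∈ ℝ^{p1×q1} and β2, β2' ∈ ℝ^{p2×q2} are all nonzero and β2 ⊗ β1 = β2' ⊗ β1', then there exists a nonzero scalar c with β1' = c β1 and β2' = c^{-1} β2. -/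
open Matrix Kronecker
namespace KPF

/-- Identifiability of the Kronecker factorization up to scaling. -/
theorem stmt8 {p1 q1 p2 q2 : ℕ}
    (β1 β1' : Matrix (Fin p1) (Fin q1) ℝ) (β2 β2' : Matrix (Fin p2) (Fin q2) ℝ)
    (h1 : β1 ≠ 0) (h2 : β2 ≠ 0) (h1' : β1' ≠ 0) (h2' : β2' ≠ 0)
    (h : β2 ⊗ₖ β1 = β2' ⊗ₖ β1') :
    ∃ c : ℝ, c ≠ 0 ∧ β1' = c • β1 ∧ β2' = c⁻¹ • β2 := by
  have hent : ∀ (i : Fin p2) (j : Fin q2) (a : Fin p1) (b : Fin q1),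
      β2 i j * β1 a b = β2' i j * β1' a b := by
    intro i j a b
    have := congrFun (congrFun h (i, a)) (j, b)
    simpa [Matrix.kroneckerMap_apply] using this
  obtain ⟨i0, j0, hij⟩ : ∃ i j, β2 i j ≠ 0 := by
    contrapose! h2; ext i j; simp [h2]
  obtain ⟨a1, b1, hab⟩ : ∃ a b, β1 a b ≠ 0 := by
    contrapose! h1; ext a b; simp [h1]
  have hij' : β2' i0 j0 ≠ 0 := by
    intro hz
    apply h1
    ext a b
    have := hent i0 j0 a b
    rw [hz, zero_mul] at this
    rcases mul_eq_zero.mp this with hc | hc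
    · exact absurd hc hij
    · simp [hc]
  refine ⟨β2 i0 j0 / β2' i0 j0, div_ne_zero hij hij', ?_, ?_⟩
  · ext a b
    have := hent i0 j0 a b
    simp only [Matrix.smul_apply, smul_eq_mul]
    field_simp
    linarith [this]
  · have hc : β1' a1 b1 = β2 i0 j0 / β2' i0 j0 * β1 a1 b1 := by
      have := hent i0 j0 a1 b1
      field_simp
      linarith [this]
    ext i j
    have h2e := hent i j a1 b1
    rw [hc] at h2e
    simp only [Matrix.smul_apply, smul_eq_mul]
    rw [inv_div]
    field_simp at h2e ⊢
    have hcanc : β1 a1 b1 * (β2' i j * β2 i0 j0) = β1 a1 b1 * (β2 i j * β2' i0 j0) := by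
      rw [h2e]
    have := mul_left_cancel₀ hab hcanc
    linarith [this]

end KPF
end
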